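/- arXiv:1609.00215 — 2 statements merged into one kernel-verified Lean document; each statement's English description precedes it below -/
import Mathlib

section
/- KVPK recipe (Theorem A.4): Let 𝒳 be a set equipped with an ℒ-convergence, i.e. a relation '(x_n) ⟶ x' between sequences in 𝒳 and points of 𝒳 such that: (i) each sequence converges to at most one limit; (ii) for every x ∈ 𝒳 the constant sequence (x, x, …) converges to x; (iii) if (x_n) ⟶ x and (x_{n_k}) is any subsequence, then (x_{n_k}) ⟶ x. Let τ be the sequential topology generated by ⟶: a set F ⊆ 𝒳 is τ-closed iff whenever x_n ∈ F for all n and (x_n) ⟶ x, then x ∈ F; τ-open sets are complements of τ-closed sets. Then for any sequence (x_n) and point x_0 in 𝒳, (x_n) converges to x_0 in the topology τ (i.e. every τ-open set containing x_0 contains x_n for all sufficiently large n) if and only if every subsequence of (x_n) contains a further subsequence (x_{n_{k_l}}) with (x_{n_{k_l}}) ⟶ x_0. -/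
open Filter Set

/-- If a sequence has an infinite constant fiber at `c` and conv-converges to `u₀`,
then `u₀ = c`. -/
private lemma kvpk_const_fiber {X : Type*} (conv : (ℕ → X) → X → Prop)
    (h_unique : ∀ (x : ℕ → X) (a b : X), conv x a → conv x b → a = b)
    (h_const : ∀ a : X, conv (fun _ => a) a)
    (h_sub : ∀ (x : ℕ → X) (a : X), conv x a →
      ∀ φ : ℕ → ℕ, StrictMono φ → conv (fun k => x (φ k)) a)
    (u : ℕ → X) (u₀ c : X) (hu : conv u u₀)
    (hc : {m | u m = c}.Infinite) : u₀ = c := by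
  obtain ⟨σ, hσ, hmemσ⟩ := Filter.extraction_of_frequently_atTop
    (Nat.frequently_atTop_iff_infinite.2 hc)
  have h1 : conv (fun k => u (σ k)) u₀ := h_sub u u₀ hu σ hσ
  have h2 : (fun k => u (σ k)) = (fun _ => c) := funext fun k => hmemσ k
  rw [h2] at h1
  exact h_unique _ _ _ h1 (h_const c)

/-- If all terms of `u` lie in the range of `v` and all fibers of `u` are finite,
then some subsequence of `u` is a subsequence of `v`; hence `u₀` is the conv-limit
of a subsequence of `v`. -/
private lemma kvpk_sub_extract {X : Type*} (conv : (ℕ → X) → X → Prop)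
    (h_sub : ∀ (x : ℕ → X) (a : X), conv x a →
      ∀ φ : ℕ → ℕ, StrictMono φ → conv (fun k => x (φ k)) a)
    (v u : ℕ → X) (u₀ : X) (hu : conv u u₀)
    (hmem : ∀ m, ∃ i, u m = v i)
    (hfib : ∀ c, {m | u m = c}.Finite) :
    ∃ ρ : ℕ → ℕ, StrictMono ρ ∧ conv (fun k => v (ρ k)) u₀ := by
  choose g hg using hmem
  -- g has "finite sublevel sets"
  have hgt : ∀ m : ℕ, ∃ m', m < m' ∧ g m < g m' := by
    intro m
    have hfin : ({m' | g m' ≤ g m} ∪ {m' | m' ≤ m}).Finite := by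
      apply Set.Finite.union _ (Set.finite_Iic m)
      have hsub : {m' | g m' ≤ g m} ⊆ ⋃ i ∈ Finset.Iic (g m), {m' | u m' = v i} := by
        intro m' hm'
        simp only [Set.mem_iUnion, Finset.mem_Iic]
        exact ⟨g m', hm', hg m'⟩
      exact Set.Finite.subset (Set.Finite.biUnion (Finset.Iic (g m)).finite_toSet
        (fun i _ => hfib (v i))) hsub
    obtain ⟨m', hm'⟩ := hfin.infinite_compl.nonempty
    simp only [Set.mem_compl_iff, Set.mem_union, Set.mem_setOf_eq, not_or, not_le] at hm'
    exact ⟨m', hm'.2, hm'.1⟩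
  set next : ℕ → ℕ := fun m => (hgt m).choose with hnext
  have hnext1 : ∀ m, m < next m := fun m => (hgt m).choose_spec.1
  have hnext2 : ∀ m, g m < g (next m) := fun m => (hgt m).choose_spec.2
  set σ : ℕ → ℕ := fun n => next^[n] 0 with hσdef
  have hσsucc : ∀ n, σ (n + 1) = next (σ n) := by
    intro n
    simp only [hσdef, Function.iterate_succ_apply']
  have hσ : StrictMono σ := strictMono_nat_of_lt_succ (fun n => by
    rw [hσsucc]; exact hnext1 (σ n))
  have hgσ : StrictMono (fun n => g (σ n)) := strictMono_nat_of_lt_succ (fun n => by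
    rw [hσsucc]; exact hnext2 (σ n))
  refine ⟨fun n => g (σ n), hgσ, ?_⟩
  have h1 : conv (fun k => u (σ k)) u₀ := h_sub u u₀ hu σ hσ
  have h2 : (fun k => u (σ k)) = (fun k => v (g (σ k))) := funext fun k => hg (σ k)
  rwa [h2] at h1

/-- KVPK recipe (Theorem A.4): for an `ℒ`-convergence on `𝒳` (unique limits,
constant sequences converge, stability under subsequences), a sequence converges
to `x₀` in the generated sequential topology (whose closed sets are the sets
closed under `⟶`-limits) iff every subsequence has a further subsequence
`⟶`-converging to `x₀`. -/
theorem stmt15 {X : Type*} (conv : (ℕ → X) → X → Prop)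
    (h_unique : ∀ (x : ℕ → X) (a b : X), conv x a → conv x b → a = b)
    (h_const : ∀ a : X, conv (fun _ => a) a)
    (h_sub : ∀ (x : ℕ → X) (a : X), conv x a →
      ∀ φ : ℕ → ℕ, StrictMono φ → conv (fun k => x (φ k)) a)
    (x : ℕ → X) (x₀ : X) :
    (∀ U : Set X,
      (∀ (y : ℕ → X), (∀ n, y n ∉ U) → ∀ y₀ : X, conv y y₀ → y₀ ∉ U) →
      x₀ ∈ U → ∃ N : ℕ, ∀ n ≥ N, x n ∈ U)
    ↔
    (∀ φ : ℕ → ℕ, StrictMono φ →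
      ∃ ψ : ℕ → ℕ, StrictMono ψ ∧ conv (fun l => x (φ (ψ l))) x₀) := by
  constructor
  · -- topological convergence → subsequence criterion
    intro hL φ hφ
    by_contra hcon
    push_neg at hcon
    -- Step 1: only finitely many k with x (φ k) = x₀
    have hfin : {k | x (φ k) = x₀}.Finite := by
      by_contra hinf
      obtain ⟨σ, hσ, hval⟩ := Filter.extraction_of_frequently_atTop
        (Nat.frequently_atTop_iff_infinite.2 hinf)
      refine hcon σ hσ ?_
      have : (fun l => x (φ (σ l))) = (fun _ => x₀) := funext fun l => hval l
      rw [this]; exact h_const x₀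
    obtain ⟨K, hK⟩ := hfin.bddAbove
    -- Pass to the tail subsequence φ'
    set φ' : ℕ → ℕ := fun k => φ (k + (K + 1)) with hφ'def
    have hφ' : StrictMono φ' := hφ.comp (fun a b h => by omega)
    have hne : ∀ k, x (φ' k) ≠ x₀ := by
      intro k hk
      have : k + (K + 1) ≤ K := hK hk
      omega
    have hnosub : ∀ ψ : ℕ → ℕ, StrictMono ψ → ¬ conv (fun l => x (φ' (ψ l))) x₀ := by
      intro ψ hψ h
      exact hcon (fun l => ψ l + (K + 1))
        (fun a b hab => Nat.add_lt_add_right (hψ hab) (K + 1)) h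
    by_cases hA : ∃ σ : ℕ → ℕ, StrictMono σ ∧ ∃ ζ, conv (fun k => x (φ' (σ k))) ζ
    · -- Case B: some subsequence conv-converges, necessarily to some ζ ≠ x₀
      obtain ⟨σ, hσ, ζ, hζ⟩ := hA
      set v : ℕ → X := fun k => x (φ' (σ k)) with hvdef
      have hζne : ζ ≠ x₀ := fun h => hnosub σ hσ (h ▸ hζ)
      set F : Set X := Set.range v ∪ {ζ} with hFdef
      have hx₀F : x₀ ∉ F := by
        intro h
        rcases h with ⟨i, hi⟩ | h
        · exact hne (σ i) hi
        · exact hζne (Set.mem_singleton_iff.mp h).symm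
      have hclosed : ∀ (y : ℕ → X), (∀ n, y n ∉ Fᶜ) → ∀ y₀ : X, conv y y₀ → y₀ ∉ Fᶜ := by
        intro u humem u₀ hu hu₀c
        have humem' : ∀ n, u n ∈ F := fun n => not_not.mp (humem n)
        have hu₀ : u₀ ∉ F := hu₀c
        by_cases hcinf : ∃ c, {m | u m = c}.Infinite
        · obtain ⟨c, hc⟩ := hcinf
          have : u₀ = c := kvpk_const_fiber conv h_unique h_const h_sub u u₀ c hu hc
          obtain ⟨m, hm⟩ := hc.nonempty
          exact hu₀ (this ▸ hm ▸ humem' m)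
        · push_neg at hcinf
          have hfibfin : ∀ c, {m | u m = c}.Finite := by
            intro c
            by_contra h
            exact h (hcinf c)
          -- only finitely many terms equal ζ; pass to a tail with terms in range v
          obtain ⟨N, hN⟩ := (hfibfin ζ).bddAbove
          set u' : ℕ → X := fun m => u (m + (N + 1)) with hu'def
          have hu' : conv u' u₀ := h_sub u u₀ hu (fun m => m + (N + 1))
            (fun a b h => Nat.add_lt_add_right h (N + 1))
          have hmem' : ∀ m, ∃ i, u' m = v i := by
            intro m
            have h1 : u (m + (N + 1)) ∈ F := humem' _
            rcases h1 with ⟨i, hi⟩ | h1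
            · exact ⟨i, hi.symm⟩
            · exfalso
              have : m + (N + 1) ≤ N := hN (Set.mem_singleton_iff.mp h1)
              omega
          have hfib' : ∀ c, {m | u' m = c}.Finite := by
            intro c
            have : {m | u' m = c} ⊆ (fun m => m + (N + 1)) ⁻¹' {m | u m = c} := by
              intro m hm; exact hm
            exact Set.Finite.subset ((hfibfin c).preimage
              (Function.Injective.injOn (fun a b h => by omega))) this
          obtain ⟨ρ, hρ, hconvρ⟩ := kvpk_sub_extract conv h_sub v u' u₀ hu' hmem' hfib'
          have hconvζ : conv (fun k => v (ρ k)) ζ := h_sub v ζ hζ ρ hρ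
          have : u₀ = ζ := h_unique _ _ _ hconvρ hconvζ
          exact hu₀ (Or.inr (this ▸ rfl))
      obtain ⟨N, hNtail⟩ := hL Fᶜ hclosed hx₀F
      have h1 : φ' (σ N) ≥ N := le_trans hσ.le_apply hφ'.le_apply
      have h2 : x (φ' (σ N)) ∈ Fᶜ := hNtail _ h1
      exact h2 (Or.inl ⟨N, rfl⟩)
    · -- Case A: no subsequence of x∘φ' conv-converges at all
      set v : ℕ → X := fun k => x (φ' k) with hvdef
      set F : Set X := Set.range v with hFdef
      have hx₀F : x₀ ∉ F := fun ⟨i, hi⟩ => hne i hi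
      have hclosed : ∀ (y : ℕ → X), (∀ n, y n ∉ Fᶜ) → ∀ y₀ : X, conv y y₀ → y₀ ∉ Fᶜ := by
        intro u humem u₀ hu hu₀c
        have humem' : ∀ n, ∃ i, u n = v i := by
          intro n
          obtain ⟨i, hi⟩ := not_not.mp (humem n)
          exact ⟨i, hi.symm⟩
        have hu₀ : u₀ ∉ F := hu₀c
        by_cases hcinf : ∃ c, {m | u m = c}.Infinite
        · obtain ⟨c, hc⟩ := hcinf
          have : u₀ = c := kvpk_const_fiber conv h_unique h_const h_sub u u₀ c hu hc
          obtain ⟨m, hm⟩ := hc.nonempty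
          obtain ⟨i, hi⟩ := humem' m
          refine hu₀ ⟨i, ?_⟩
          rw [← hi, this]
          exact hm
        · push_neg at hcinf
          have hfibfin : ∀ c, {m | u m = c}.Finite := by
            intro c
            by_contra h
            exact h (hcinf c)
          obtain ⟨ρ, hρ, hconvρ⟩ := kvpk_sub_extract conv h_sub v u u₀ hu humem' hfibfin
          exact hA ⟨ρ, hρ, u₀, hconvρ⟩
      obtain ⟨N, hNtail⟩ := hL Fᶜ hclosed hx₀F
      have h2 : x (φ' N) ∈ Fᶜ := hNtail _ hφ'.le_apply
      exact h2 ⟨N, rfl⟩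
  · -- subsequence criterion → topological convergence
    intro hR U hUcl hx₀
    by_contra h
    push_neg at h
    have hfreq : ∃ᶠ n in atTop, x n ∉ U := by
      rw [frequently_atTop]
      intro N
      obtain ⟨n, hn, h'⟩ := h N
      exact ⟨n, hn, h'⟩
    obtain ⟨φ, hφ, hmem⟩ := Filter.extraction_of_frequently_atTop hfreq
    obtain ⟨ψ, hψ, hconv⟩ := hR φ hφ
    exact hUcl (fun l => x (φ (ψ l))) (fun l => hmem (ψ l)) x₀ hconv hx₀
end

section
/- Addition is sequentially S-continuous (Section 4, item 7): If x_n →_S x_0 and y_n →_S y_0 in D([0,T]), then x_n + y_n →_S x_0 + y_0 (where addition is pointwise). -/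
open MeasureTheory Filter Set Topology

noncomputable section

/-- `x` is càdlàg on `[0,T]`: right-continuous at every `t ∈ [0,T)` and
admitting a left limit at every `t ∈ (0,T]`. -/
def Cadlag (T : ℝ) (x : ℝ → ℝ) : Prop :=
  (∀ t ∈ Set.Ico (0:ℝ) T, Filter.Tendsto x (nhdsWithin t (Set.Ioi t)) (nhds (x t))) ∧
  (∀ t ∈ Set.Ioc (0:ℝ) T, ∃ L : ℝ, Filter.Tendsto x (nhdsWithin t (Set.Iio t)) (nhds L))

/-- membership in `𝕍`: càdlàg of finite total variation on `[0,T]`. -/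
def MemV (T : ℝ) (v : ℝ → ℝ) : Prop :=
  Cadlag T v ∧ BoundedVariationOn v (Set.Icc 0 T)

/-- `μ` is the finite signed (Lebesgue–Stieltjes) measure induced by `v` on `[0,T]`:
`μ([0,t]) = v(t)` for `t ∈ [0,T]`, and `μ` vanishes outside `[0,T]`. -/
def Represents (T : ℝ) (μ : MeasureTheory.SignedMeasure ℝ) (v : ℝ → ℝ) : Prop :=
  (∀ t ∈ Set.Icc (0:ℝ) T, μ (Set.Icc 0 t) = v t) ∧
  (∀ s : Set ℝ, MeasurableSet s → s ∩ Set.Icc (0:ℝ) T = ∅ → μ s = 0)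

/-- Integral of `f` against a signed measure. -/
noncomputable def sInt (μ : MeasureTheory.SignedMeasure ℝ) (f : ℝ → ℝ) : ℝ :=
  (∫ t, f t ∂μ.toJordanDecomposition.posPart) - (∫ t, f t ∂μ.toJordanDecomposition.negPart)

/-- `∫_{[0,T]} f dv` : integral of `f` with respect to the Lebesgue–Stieltjes
signed measure induced by `v` on `[0,T]`. -/
noncomputable def intD (T : ℝ) (f v : ℝ → ℝ) : ℝ :=
  letI := Classical.propDecidable (∃ μ : MeasureTheory.SignedMeasure ℝ, Represents T μ v)
  if h : ∃ μ : MeasureTheory.SignedMeasure ℝ, Represents T μ v then sInt h.choose f else 0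

/-- S-convergence `x_n →_S x₀` on `D([0,T])`. -/
def SConv (T : ℝ) (x : ℕ → ℝ → ℝ) (x₀ : ℝ → ℝ) : Prop :=
  ∀ ε > (0:ℝ), ∃ v : ℕ → ℝ → ℝ, ∃ v₀ : ℝ → ℝ,
    (∀ n, MemV T (v n)) ∧ MemV T v₀ ∧
    (∀ n, ∀ t ∈ Set.Icc (0:ℝ) T, |x n t - v n t| ≤ ε) ∧
    (∀ t ∈ Set.Icc (0:ℝ) T, |x₀ t - v₀ t| ≤ ε) ∧
    (∀ f : ℝ → ℝ, Continuous f →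
      Filter.Tendsto (fun n => intD T f (v n)) Filter.atTop (nhds (intD T f v₀)))

/-- `x_n ⇒*_S x₀` : every subsequence contains a further subsequence `→_S`-converging to `x₀`. -/
def SStarConv (T : ℝ) (x : ℕ → ℝ → ℝ) (x₀ : ℝ → ℝ) : Prop :=
  ∀ φ : ℕ → ℕ, StrictMono φ →
    ∃ ψ : ℕ → ℕ, StrictMono ψ ∧ SConv T (fun k => x (φ (ψ k))) x₀

/-- membership in `𝔸([0,T])`: continuous, of finite variation, vanishing at `0`. -/
def MemA (T : ℝ) (A : ℝ → ℝ) : Prop :=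
  ContinuousOn A (Set.Icc 0 T) ∧ BoundedVariationOn A (Set.Icc 0 T) ∧ A 0 = 0

/-- `A_n →_τ A₀` : uniform convergence on `[0,T]` together with uniformly bounded
total variations. -/
def TauConv (T : ℝ) (A : ℕ → ℝ → ℝ) (A₀ : ℝ → ℝ) : Prop :=
  TendstoUniformlyOn (fun n => A n) A₀ Filter.atTop (Set.Icc 0 T) ∧
  ∃ M : ℝ, ∀ n, eVariationOn (A n) (Set.Icc 0 T) ≤ ENNReal.ofReal M

/-- `x` has (at least) `k` up-crossings of the levels `a < b` on `[0,T]`. -/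
def HasUpcrossings (T a b : ℝ) (x : ℝ → ℝ) (k : ℕ) : Prop :=
  ∃ s u : Fin k → ℝ, (∀ i, 0 ≤ s i ∧ s i < u i ∧ u i ≤ T) ∧
    (∀ i j : Fin k, i < j → u i < s j) ∧
    (∀ i, x (s i) < a ∧ b < x (u i))

/-- `x` has (at least) `k` `η`-oscillations on `[0,T]`. -/
def HasOscillations (T η : ℝ) (x : ℝ → ℝ) (k : ℕ) : Prop :=
  ∃ s u : Fin k → ℝ, (∀ i, 0 ≤ s i ∧ s i < u i ∧ u i ≤ T) ∧
    (∀ i j : Fin k, i < j → u i ≤ s j) ∧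
    (∀ i, |x (u i) - x (s i)| > η)

section AuxStmt18

open MeasureTheory

lemma cadlag_add18 {T : ℝ} {a b : ℝ → ℝ} (ha : Cadlag T a) (hb : Cadlag T b) :
    Cadlag T (fun t => a t + b t) := by
  constructor
  · intro t ht
    exact (ha.1 t ht).add (hb.1 t ht)
  · intro t ht
    obtain ⟨L1, hL1⟩ := ha.2 t ht
    obtain ⟨L2, hL2⟩ := hb.2 t ht
    exact ⟨L1 + L2, hL1.add hL2⟩

lemma eVariationOn_add_le18 (f g : ℝ → ℝ) (s : Set ℝ) :
    eVariationOn (fun t => f t + g t) s ≤ eVariationOn f s + eVariationOn g s := by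
  refine iSup_le ?_
  rintro ⟨n, u, hu, us⟩
  calc (∑ i ∈ Finset.range n, edist (f (u (i+1)) + g (u (i+1))) (f (u i) + g (u i)))
      ≤ ∑ i ∈ Finset.range n,
          (edist (f (u (i+1))) (f (u i)) + edist (g (u (i+1))) (g (u i))) := by
        refine Finset.sum_le_sum fun i _ => ?_
        rw [edist_dist, edist_dist, edist_dist, ← ENNReal.ofReal_add dist_nonneg dist_nonneg]
        exact ENNReal.ofReal_le_ofReal (dist_add_add_le _ _ _ _)
    _ = (∑ i ∈ Finset.range n, edist (f (u (i+1))) (f (u i)))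
          + ∑ i ∈ Finset.range n, edist (g (u (i+1))) (g (u i)) := Finset.sum_add_distrib
    _ ≤ eVariationOn f s + eVariationOn g s :=
        add_le_add (eVariationOn.sum_le (f := f) (n := n) hu us) (eVariationOn.sum_le (f := g) (n := n) hu us)

lemma signed_apply_eq18 (μ : SignedMeasure ℝ) {A : Set ℝ} (hA : MeasurableSet A) :
    μ A = (μ.toJordanDecomposition.posPart A).toReal
        - (μ.toJordanDecomposition.negPart A).toReal := by
  conv_lhs => rw [← μ.toSignedMeasure_toJordanDecomposition]
  rw [JordanDecomposition.toSignedMeasure, Measure.toSignedMeasure_sub_apply hA]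
  rfl

lemma jordan_outside18 {T : ℝ} {μ : SignedMeasure ℝ}
    (h : ∀ s : Set ℝ, MeasurableSet s → s ∩ Set.Icc (0:ℝ) T = ∅ → μ s = 0) :
    μ.toJordanDecomposition.posPart (Set.Icc (0:ℝ) T)ᶜ = 0 ∧
      μ.toJordanDecomposition.negPart (Set.Icc (0:ℝ) T)ᶜ = 0 := by
  obtain ⟨i, hi₁, hi₂, hi₃, hpos, hneg⟩ := μ.toJordanDecomposition_spec
  constructor
  · rw [hpos, SignedMeasure.toMeasureOfZeroLE_apply _ hi₂ hi₁ measurableSet_Icc.compl]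
    have : μ (i ∩ (Set.Icc (0:ℝ) T)ᶜ) = 0 := by
      refine h _ (hi₁.inter measurableSet_Icc.compl) ?_
      ext z; simp only [Set.mem_inter_iff, Set.mem_compl_iff, Set.mem_empty_iff_false,
        iff_false, not_and]
      tauto
    simp [this]
  · rw [hneg, SignedMeasure.toMeasureOfLEZero_apply _ hi₃ hi₁.compl measurableSet_Icc.compl]
    have : μ (iᶜ ∩ (Set.Icc (0:ℝ) T)ᶜ) = 0 := by
      refine h _ (hi₁.compl.inter measurableSet_Icc.compl) ?_
      ext z; simp only [Set.mem_inter_iff, Set.mem_compl_iff, Set.mem_empty_iff_false,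
        iff_false, not_and]
      tauto
    simp [this]

lemma integrable_of_outside18 {T : ℝ} {κ : Measure ℝ} [IsFiniteMeasure κ]
    (h : κ (Set.Icc (0:ℝ) T)ᶜ = 0) {f : ℝ → ℝ} (hf : Continuous f) :
    Integrable f κ := by
  have hres : κ.restrict (Set.Icc (0:ℝ) T) = κ :=
    Measure.restrict_eq_self_of_ae_mem (by
      rw [Filter.eventually_iff, mem_ae_iff]
      exact h)
  rw [← hres]
  exact hf.continuousOn.integrableOn_compact isCompact_Icc

end AuxStmt18
section AuxStmt18b

open MeasureTheory

lemma sInt_add18 {T : ℝ} {μ ν : SignedMeasure ℝ}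
    (hμ : ∀ s : Set ℝ, MeasurableSet s → s ∩ Set.Icc (0:ℝ) T = ∅ → μ s = 0)
    (hν : ∀ s : Set ℝ, MeasurableSet s → s ∩ Set.Icc (0:ℝ) T = ∅ → ν s = 0)
    {f : ℝ → ℝ} (hf : Continuous f) :
    sInt (μ + ν) f = sInt μ f + sInt ν f := by
  have hρ : ∀ s : Set ℝ, MeasurableSet s → s ∩ Set.Icc (0:ℝ) T = ∅ → (μ + ν) s = 0 := by
    intro s hs hdisj
    rw [VectorMeasure.add_apply, hμ s hs hdisj, hν s hs hdisj, add_zero]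
  set Pμ := μ.toJordanDecomposition.posPart with hPμ
  set Nμ := μ.toJordanDecomposition.negPart with hNμ
  set Pν := ν.toJordanDecomposition.posPart with hPν
  set Nν := ν.toJordanDecomposition.negPart with hNν
  set Pρ := (μ + ν).toJordanDecomposition.posPart with hPρ
  set Nρ := (μ + ν).toJordanDecomposition.negPart with hNρ
  have hmeas : Pρ + (Nμ + Nν) = Nρ + (Pμ + Pν) := by
    ext A hA
    have h1 := signed_apply_eq18 μ hA
    have h2 := signed_apply_eq18 ν hA
    have h3 := signed_apply_eq18 (μ + ν) hA
    have h4 : (μ + ν) A = μ A + ν A := VectorMeasure.add_apply _ _ _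
    simp only [Measure.add_apply]
    have e1 : Pμ A ≠ ⊤ := measure_ne_top _ _
    have e2 : Nμ A ≠ ⊤ := measure_ne_top _ _
    have e3 : Pν A ≠ ⊤ := measure_ne_top _ _
    have e4 : Nν A ≠ ⊤ := measure_ne_top _ _
    have e5 : Pρ A ≠ ⊤ := measure_ne_top _ _
    have e6 : Nρ A ≠ ⊤ := measure_ne_top _ _
    have : (Pρ A + (Nμ A + Nν A)).toReal = (Nρ A + (Pμ A + Pν A)).toReal := by
      rw [ENNReal.toReal_add e5 (ENNReal.add_ne_top.mpr ⟨e2, e4⟩),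
        ENNReal.toReal_add e6 (ENNReal.add_ne_top.mpr ⟨e1, e3⟩),
        ENNReal.toReal_add e2 e4, ENNReal.toReal_add e1 e3]
      rw [← hPρ, ← hNρ] at h3
      linarith
    exact (ENNReal.toReal_eq_toReal_iff'
      (ENNReal.add_ne_top.mpr ⟨e5, ENNReal.add_ne_top.mpr ⟨e2, e4⟩⟩)
      (ENNReal.add_ne_top.mpr ⟨e6, ENNReal.add_ne_top.mpr ⟨e1, e3⟩⟩)).mp this
  -- integrability
  have iPμ : Integrable f Pμ := integrable_of_outside18 (T := T) (jordan_outside18 hμ).1 hf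
  have iNμ : Integrable f Nμ := integrable_of_outside18 (T := T) (jordan_outside18 hμ).2 hf
  have iPν : Integrable f Pν := integrable_of_outside18 (T := T) (jordan_outside18 hν).1 hf
  have iNν : Integrable f Nν := integrable_of_outside18 (T := T) (jordan_outside18 hν).2 hf
  have iPρ : Integrable f Pρ := integrable_of_outside18 (T := T) (jordan_outside18 hρ).1 hf
  have iNρ : Integrable f Nρ := integrable_of_outside18 (T := T) (jordan_outside18 hρ).2 hf
  have hint : (∫ t, f t ∂Pρ) + ((∫ t, f t ∂Nμ) + ∫ t, f t ∂Nν)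
      = (∫ t, f t ∂Nρ) + ((∫ t, f t ∂Pμ) + ∫ t, f t ∂Pν) := by
    have : (∫ t, f t ∂(Pρ + (Nμ + Nν))) = ∫ t, f t ∂(Nρ + (Pμ + Pν)) := by rw [hmeas]
    rwa [integral_add_measure iPρ (iNμ.add_measure iNν),
      integral_add_measure iNμ iNν,
      integral_add_measure iNρ (iPμ.add_measure iPν),
      integral_add_measure iPμ iPν] at this
  simp only [sInt]
  linarith

end AuxStmt18b
section AuxStmt18c

open MeasureTheory

lemma represents_unique18 {T : ℝ} (hT : 0 ≤ T) {μ ν : SignedMeasure ℝ} {v : ℝ → ℝ}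
    (h1 : Represents T μ v) (h2 : Represents T ν v) : μ = ν := by
  classical
  set C : Set (Set ℝ) :=
    {A | (∃ t ∈ Set.Icc (0:ℝ) T, A = Set.Icc 0 t) ∨
      (MeasurableSet A ∧ A ∩ Set.Icc (0:ℝ) T = ∅)} with hC
  have hmemC : ∀ A ∈ C, MeasurableSet A ∧ μ A = ν A := by
    rintro A (⟨t, ht, rfl⟩ | ⟨hmA, hdA⟩)
    · exact ⟨measurableSet_Icc, by rw [h1.1 t ht, h2.1 t ht]⟩
    · exact ⟨hmA, by rw [h1.2 A hmA hdA, h2.2 A hmA hdA]⟩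
  have hpi : IsPiSystem C := by
    rintro A (⟨t1, ht1, rfl⟩ | ⟨hmA, hdA⟩) B (⟨t2, ht2, rfl⟩ | ⟨hmB, hdB⟩) _
    · left
      refine ⟨min t1 t2, ⟨le_min ht1.1 ht2.1, (min_le_left _ _).trans ht1.2⟩, ?_⟩
      rw [Set.Icc_inter_Icc]
      simp
    · right
      refine ⟨measurableSet_Icc.inter hmB, ?_⟩
      have : Set.Icc 0 t1 ∩ B ∩ Set.Icc 0 T ⊆ B ∩ Set.Icc 0 T := by
        intro z hz; exact ⟨hz.1.2, hz.2⟩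
      rw [← Set.subset_empty_iff, ← hdB]
      exact this
    · right
      refine ⟨hmA.inter measurableSet_Icc, ?_⟩
      have : A ∩ Set.Icc 0 t2 ∩ Set.Icc 0 T ⊆ A ∩ Set.Icc 0 T := by
        intro z hz; exact ⟨hz.1.1, hz.2⟩
      rw [← Set.subset_empty_iff, ← hdA]
      exact this
    · right
      refine ⟨hmA.inter hmB, ?_⟩
      have : A ∩ B ∩ Set.Icc 0 T ⊆ A ∩ Set.Icc 0 T := by
        intro z hz; exact ⟨hz.1.1, hz.2⟩
      rw [← Set.subset_empty_iff, ← hdA]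
      exact this
  have hgen : (inferInstance : MeasurableSpace ℝ) = MeasurableSpace.generateFrom C := by
    rw [BorelSpace.measurable_eq (α := ℝ)]
    refine le_antisymm ?_ (MeasurableSpace.generateFrom_le fun A hA => (hmemC A hA).1)
    rw [borel_eq_generateFrom_Iic ℝ]
    refine MeasurableSpace.generateFrom_le ?_
    rintro _ ⟨a, rfl⟩
    have hsplit : Set.Iic a = (Set.Iic a ∩ Set.Icc 0 T) ∪ (Set.Iic a \ Set.Icc 0 T) :=
      (Set.inter_union_diff _ _).symm
    rw [hsplit]
    refine MeasurableSet.union ?_ ?_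
    · by_cases ha : a < 0
      · have : Set.Iic a ∩ Set.Icc 0 T = ∅ := by
          ext z
          simp only [Set.mem_inter_iff, Set.mem_Iic, Set.mem_Icc, Set.mem_empty_iff_false,
            iff_false, not_and]
          intro hz1 hz2
          intro h; linarith
        rw [this]
        exact @MeasurableSet.empty _ (MeasurableSpace.generateFrom C)
      · push_neg at ha
        have : Set.Iic a ∩ Set.Icc 0 T = Set.Icc 0 (min a T) := by
          ext z
          simp only [Set.mem_inter_iff, Set.mem_Iic, Set.mem_Icc, le_min_iff]
          constructor
          · rintro ⟨hz1, hz2, hz3⟩; exact ⟨hz2, hz1, hz3⟩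
          · rintro ⟨hz1, hz2, hz3⟩; exact ⟨hz2, hz1, hz3⟩
        rw [this]
        exact MeasurableSpace.measurableSet_generateFrom
          (Or.inl ⟨min a T, ⟨le_min ha hT, min_le_right _ _⟩, rfl⟩)
    · exact MeasurableSpace.measurableSet_generateFrom
        (Or.inr ⟨measurableSet_Iic.diff measurableSet_Icc, by
          ext z
          simp only [Set.mem_inter_iff, Set.mem_diff, Set.mem_empty_iff_false, iff_false,
            not_and]
          tauto⟩)
  set Pμ := μ.toJordanDecomposition.posPart
  set Nμ := μ.toJordanDecomposition.negPart
  set Pν := ν.toJordanDecomposition.posPart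
  set Nν := ν.toJordanDecomposition.negPart
  have key : ∀ A : Set ℝ, MeasurableSet A → μ A = ν A →
      (Pμ + Nν) A = (Pν + Nμ) A := by
    intro A hA hAeq
    have h1 := signed_apply_eq18 μ hA
    have h2 := signed_apply_eq18 ν hA
    simp only [Measure.add_apply]
    have e1 : Pμ A ≠ ⊤ := measure_ne_top _ _
    have e2 : Nμ A ≠ ⊤ := measure_ne_top _ _
    have e3 : Pν A ≠ ⊤ := measure_ne_top _ _
    have e4 : Nν A ≠ ⊤ := measure_ne_top _ _
    refine (ENNReal.toReal_eq_toReal_iff' (ENNReal.add_ne_top.mpr ⟨e1, e4⟩)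
      (ENNReal.add_ne_top.mpr ⟨e3, e2⟩)).mp ?_
    rw [ENNReal.toReal_add e1 e4, ENNReal.toReal_add e3 e2]
    linarith
  have hmeq : (Pμ + Nν) = (Pν + Nμ) := by
    refine ext_of_generate_finite C hgen hpi ?_ ?_
    · intro A hA
      exact key A (hmemC A hA).1 (hmemC A hA).2
    · have hIcc : (Pμ + Nν) (Set.Icc 0 T) = (Pν + Nμ) (Set.Icc 0 T) :=
        key _ measurableSet_Icc (by rw [h1.1 T ⟨hT, le_rfl⟩, h2.1 T ⟨hT, le_rfl⟩])
      have hcompl : (Pμ + Nν) (Set.Icc 0 T)ᶜ = (Pν + Nμ) (Set.Icc 0 T)ᶜ :=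
        key _ measurableSet_Icc.compl (by
          rw [h1.2 _ measurableSet_Icc.compl (Set.compl_inter_self _),
            h2.2 _ measurableSet_Icc.compl (Set.compl_inter_self _)])
      rw [← measure_add_measure_compl (measurableSet_Icc (a := (0:ℝ)) (b := T)), hIcc, hcompl,
        measure_add_measure_compl measurableSet_Icc]
  refine VectorMeasure.ext fun A hA => ?_
  have hA2 : (Pμ + Nν) A = (Pν + Nμ) A := by rw [hmeq]
  simp only [Measure.add_apply] at hA2
  have e1 : Pμ A ≠ ⊤ := measure_ne_top _ _
  have e2 : Nμ A ≠ ⊤ := measure_ne_top _ _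
  have e3 : Pν A ≠ ⊤ := measure_ne_top _ _
  have e4 : Nν A ≠ ⊤ := measure_ne_top _ _
  have hr : (Pμ A).toReal + (Nν A).toReal = (Pν A).toReal + (Nμ A).toReal := by
    rw [← ENNReal.toReal_add e1 e4, ← ENNReal.toReal_add e3 e2, hA2]
  rw [signed_apply_eq18 μ hA, signed_apply_eq18 ν hA]
  linarith

end AuxStmt18c
section AuxStmt18d

open MeasureTheory Set Filter
open scoped ENNReal NNReal

/-- If `F` is right-continuous at `x` and has finite total variation, then the variation
of `F` on `[x, u]` is small for `u` close to `x` on the right. -/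
lemma small_var_right18 {F : ℝ → ℝ} (hbv : eVariationOn F Set.univ ≠ ⊤) {x : ℝ}
    (hrc : Filter.Tendsto F (nhdsWithin x (Set.Ioi x)) (nhds (F x))) {δ : ℝ} (hδ : 0 < δ) :
    ∃ u, x < u ∧ eVariationOn F (Set.Icc x u) ≤ ENNReal.ofReal δ + ENNReal.ofReal δ := by
  by_contra hcon
  push_neg at hcon
  set c : ℝ≥0∞ := ⨅ (u : ℝ) (_ : x < u), eVariationOn F (Set.Icc x u) with hc
  have hc_le : ∀ u, x < u → c ≤ eVariationOn F (Set.Icc x u) := by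
    intro u hu
    exact iInf₂_le u hu
  have hc_ne_top : c ≠ ⊤ := by
    intro h
    have := hc_le (x + 1) (by linarith)
    rw [h] at this
    exact hbv (top_le_iff.mp (this.trans (eVariationOn.mono F (Set.subset_univ _))))
  -- right continuity: get w
  have hev : ∀ᶠ z in nhdsWithin x (Set.Ioi x), dist (F z) (F x) < δ :=
    (Metric.tendsto_nhds.mp hrc) δ hδ
  obtain ⟨w, hw, hwsub⟩ := mem_nhdsGT_iff_exists_Ioc_subset.mp hev
  -- get u with variation close to the infimum
  have hlt : c < c + ENNReal.ofReal δ :=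
    ENNReal.lt_add_right hc_ne_top (by simp [ENNReal.ofReal_eq_zero]; linarith)
  obtain ⟨u, hu⟩ : ∃ u, ⨅ (_ : x < u), eVariationOn F (Set.Icc x u) < c + ENNReal.ofReal δ := by
    rw [hc] at hlt
    exact iInf_lt_iff.mp hlt
  obtain ⟨hxu, huvar⟩ : x < u ∧ eVariationOn F (Set.Icc x u) < c + ENNReal.ofReal δ := by
    by_cases h : x < u
    · refine ⟨h, ?_⟩
      rwa [iInf_pos h] at hu
    · rw [iInf_neg h] at hu
      exact absurd hu (not_lt.mpr le_top)
  set u' := min u w with hu'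
  have hxu' : x < u' := lt_min hxu hw
  have hu'var : eVariationOn F (Set.Icc x u') < c + ENNReal.ofReal δ :=
    lt_of_le_of_lt (eVariationOn.mono F (Set.Icc_subset_Icc_right (min_le_left _ _))) huvar
  -- tail bound
  have htail : ∀ z, x < z → z ≤ u' → eVariationOn F (Set.Icc z u') ≤ ENNReal.ofReal δ := by
    intro z hxz hzu'
    have hadd := eVariationOn.Icc_add_Icc F (le_of_lt hxz) hzu' (Set.mem_univ z)
    simp only [Set.univ_inter] at hadd
    have h1 : c + eVariationOn F (Set.Icc z u') ≤ c + ENNReal.ofReal δ := by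
      calc c + eVariationOn F (Set.Icc z u')
          ≤ eVariationOn F (Set.Icc x z) + eVariationOn F (Set.Icc z u') :=
            add_le_add (hc_le z hxz) le_rfl
        _ = eVariationOn F (Set.Icc x u') := hadd
        _ ≤ c + ENNReal.ofReal δ := le_of_lt hu'var
    exact (ENNReal.add_le_add_iff_left hc_ne_top).mp h1
  -- main bound
  have hmain : eVariationOn F (Set.Icc x u') ≤ ENNReal.ofReal δ + ENNReal.ofReal δ := by
    refine iSup_le ?_
    rintro ⟨n, us, hus, husmem⟩
    dsimp only
    by_cases hall : ∀ i, i ≤ n → us i ≤ x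
    · have hx0 : ∀ i, i ≤ n → us i = x := fun i hi =>
        le_antisymm (hall i hi) (husmem i).1
      calc (∑ i ∈ Finset.range n, edist (F (us (i+1))) (F (us i)))
          = ∑ i ∈ Finset.range n, 0 := by
            refine Finset.sum_congr rfl fun i hi => ?_
            have hi' := Finset.mem_range.mp hi
            rw [hx0 i (le_of_lt hi'), hx0 (i+1) hi', edist_self]
        _ = 0 := Finset.sum_const_zero
        _ ≤ _ := zero_le
    · push_neg at hall
      classical
      have hP : ∃ i, i ≤ n ∧ x < us i := hall
      set k := Nat.find hP with hkdef
      obtain ⟨hkn, hxk⟩ : k ≤ n ∧ x < us k := Nat.find_spec hP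
      have hkmin : ∀ j, j < k → us j = x := by
        intro j hj
        have h1 := Nat.find_min hP hj
        push_neg at h1
        exact le_antisymm (h1 (le_trans (le_of_lt hj) hkn)) (husmem j).1
      have split : (∑ i ∈ Finset.range n, edist (F (us (i+1))) (F (us i)))
          = (∑ i ∈ Finset.range k, edist (F (us (i+1))) (F (us i)))
            + ∑ i ∈ Finset.Ico k n, edist (F (us (i+1))) (F (us i)) := by
        rw [Finset.range_eq_Ico, ← Finset.sum_Ico_consecutive _ (Nat.zero_le k) hkn,
          ← Finset.range_eq_Ico]
      rw [split]
      refine add_le_add ?_ ?_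
      · rcases Nat.eq_zero_or_pos k with hk0 | hk0
        · rw [hk0]
          simp
        · obtain ⟨m, hm⟩ : ∃ m, k = m + 1 := ⟨k - 1, (Nat.succ_pred_eq_of_pos hk0).symm⟩
          rw [hm, Finset.sum_range_succ]
          have hzero : (∑ i ∈ Finset.range m, edist (F (us (i+1))) (F (us i))) = 0 := by
            refine Finset.sum_eq_zero fun i hi => ?_
            have hi' := Finset.mem_range.mp hi
            rw [hkmin i (by omega), hkmin (i+1) (by omega), edist_self]
          have hmx : us m = x := hkmin m (by omega)
          have hmem1 : us (m+1) ∈ Set.Ioc x w := by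
            refine ⟨?_, le_trans (husmem (m+1)).2 (min_le_right u w)⟩
            rw [← hm]; exact hxk
          rw [hzero, zero_add, hmx, edist_dist]
          exact ENNReal.ofReal_le_ofReal (le_of_lt (hwsub hmem1))
      · rw [Finset.sum_Ico_eq_sum_range]
        have hmono2 : Monotone (fun j => us (k + j)) := fun a b hab => hus (by omega)
        have hmem2 : ∀ j, us (k + j) ∈ Set.Icc (us k) u' :=
          fun j => ⟨hus (Nat.le_add_right _ _), (husmem _).2⟩
        refine le_trans ?_ (htail (us k) hxk (husmem k).2)
        exact eVariationOn.sum_le (f := F) (n := n - k) hmono2 hmem2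
  exact absurd hmain (not_le.mpr (hcon u' hxu'))

end AuxStmt18d
section AuxStmt18e

open MeasureTheory Set Filter
open scoped ENNReal

lemma evar_Iic18 {v0 : ℝ} {F : ℝ → ℝ} (h0 : ∀ t : ℝ, t < 0 → F t = 0) (hF0 : F 0 = v0) :
    eVariationOn F (Set.Iic 0) ≤ ENNReal.ofReal |v0| := by
  classical
  refine iSup_le ?_
  rintro ⟨n, u, hu, hmem⟩
  dsimp only
  have hmem' : ∀ i, u i ≤ 0 := fun i => Set.mem_Iic.mp (hmem i)
  have hbound : ∀ i, edist (F (u (i+1))) (F (u i)) ≤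
      (if u i < 0 ∧ ¬ u (i+1) < 0 then ENNReal.ofReal |v0| else 0) := by
    intro i
    by_cases h1 : u i < 0
    · by_cases h2 : u (i+1) < 0
      · rw [h0 _ h1, h0 _ h2, edist_self]
        exact zero_le
      · have e2 : u (i+1) = 0 := le_antisymm (hmem' (i+1)) (not_lt.mp h2)
        rw [if_pos ⟨h1, h2⟩, h0 _ h1, e2, hF0, edist_dist, Real.dist_eq, sub_zero]
    · have h2 : ¬ u (i+1) < 0 := fun hc => h1 (lt_of_le_of_lt (hu (Nat.le_succ i)) hc)
      have e1 : u i = 0 := le_antisymm (hmem' i) (not_lt.mp h1)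
      have e2 : u (i+1) = 0 := le_antisymm (hmem' (i+1)) (not_lt.mp h2)
      rw [e1, e2, edist_self]
      exact zero_le
  refine le_trans (Finset.sum_le_sum fun i _ => hbound i) ?_
  by_cases hex : ∃ i ∈ Finset.range n, u i < 0 ∧ ¬ u (i+1) < 0
  · obtain ⟨i0, hi0mem, hi0⟩ := hex
    have huniq : ∀ j ∈ Finset.range n, j ≠ i0 →
        (if u j < 0 ∧ ¬ u (j+1) < 0 then ENNReal.ofReal |v0| else 0) = 0 := by
      intro j _ hj
      rw [if_neg]
      rintro ⟨hj1, hj2⟩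
      rcases lt_or_gt_of_ne hj with h | h
      · exact hj2 (lt_of_le_of_lt (hu (by omega)) hi0.1)
      · exact hi0.2 (lt_of_le_of_lt (hu (by omega : i0 + 1 ≤ j)) hj1)
    rw [Finset.sum_eq_single_of_mem i0 hi0mem huniq, if_pos hi0]
  · push_neg at hex
    have : ∀ j ∈ Finset.range n,
        (if u j < 0 ∧ ¬ u (j+1) < 0 then ENNReal.ofReal |v0| else 0) = 0 := by
      intro j hj
      rw [if_neg]
      rintro ⟨hj1, hj2⟩
      exact hj2 (hex j hj hj1)
    rw [Finset.sum_eq_zero this]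
    exact zero_le

end AuxStmt18e
section AuxStmt18f

open MeasureTheory Set Filter Function
open scoped ENNReal

lemma exists_represents18 {T : ℝ} (hT : 0 < T) {v : ℝ → ℝ} (hv : MemV T v) :
    ∃ μ : SignedMeasure ℝ, Represents T μ v := by
  classical
  set F : ℝ → ℝ := fun t => if t < 0 then 0 else v (min t T) with hF
  have hF_neg : ∀ t : ℝ, t < 0 → F t = 0 := fun t ht => if_pos ht
  have hF_Icc : ∀ t : ℝ, 0 ≤ t → t ≤ T → F t = v t := by
    intro t h0 h1
    simp only [hF]
    rw [if_neg (not_lt.mpr h0), min_eq_left h1]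
  have hF_ge : ∀ t : ℝ, T ≤ t → F t = v T := by
    intro t ht
    simp only [hF]
    rw [if_neg (not_lt.mpr (le_trans hT.le ht)), min_eq_right ht]
  have hF0 : F 0 = v 0 := hF_Icc 0 le_rfl hT.le
  -- right continuity of F everywhere
  have hFrc : ∀ x : ℝ, Filter.Tendsto F (nhdsWithin x (Set.Ioi x)) (nhds (F x)) := by
    intro x
    rcases lt_or_ge x 0 with hx | hx
    · rw [hF_neg x hx]
      apply Filter.Tendsto.congr' _ tendsto_const_nhds
      filter_upwards [Ioo_mem_nhdsGT_of_mem ⟨le_refl x, hx⟩] with z hz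
      exact (hF_neg z hz.2).symm
    · rcases lt_or_ge x T with hxT | hxT
      · have hxv := hv.1.1 x ⟨hx, hxT⟩
        rw [hF_Icc x hx hxT.le]
        apply Filter.Tendsto.congr' _ hxv
        filter_upwards [Ioo_mem_nhdsGT_of_mem ⟨le_refl x, hxT⟩] with z hz
        exact (hF_Icc z (le_trans hx hz.1.le) hz.2.le).symm
      · rw [hF_ge x hxT]
        apply Filter.Tendsto.congr' _ tendsto_const_nhds
        filter_upwards [self_mem_nhdsWithin] with z hz
        exact (hF_ge z (le_trans hxT (le_of_lt hz))).symm
  have hFrc' : ∀ x : ℝ, ContinuousWithinAt F (Set.Ici x) x := fun x =>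
    continuousWithinAt_Ioi_iff_Ici.mp (hFrc x)
  -- bounded variation of F on univ
  have hIcc : eVariationOn F (Set.Icc 0 T) = eVariationOn v (Set.Icc 0 T) :=
    eVariationOn.eq_of_eqOn (fun t ht => hF_Icc t ht.1 ht.2)
  have hIci : eVariationOn F (Set.Ici T) = 0 := by
    apply eVariationOn.constant_on
    rintro _ ⟨a, ha, rfl⟩ _ ⟨b, hb, rfl⟩
    rw [hF_ge a ha, hF_ge b hb]
  have hbvF : BoundedVariationOn F Set.univ := by
    show eVariationOn F Set.univ ≠ ⊤
    have h1 : eVariationOn F Set.univ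
        = eVariationOn F (Set.Iic 0) + eVariationOn F (Set.Ici 0) := by
      rw [← Set.Iic_union_Ici (a := (0:ℝ))]
      exact eVariationOn.union F isGreatest_Iic isLeast_Ici
    have h2 : eVariationOn F (Set.Ici 0) =
        eVariationOn F (Set.Icc 0 T) + eVariationOn F (Set.Ici T) := by
      rw [← Set.Icc_union_Ici_eq_Ici hT.le]
      exact eVariationOn.union F ⟨⟨hT.le, le_rfl⟩, fun z hz => hz.2⟩ isLeast_Ici
    rw [h1, h2, hIcc, hIci, add_zero]
    refine ENNReal.add_ne_top.mpr ⟨?_, hv.2⟩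
    exact (lt_of_le_of_lt (evar_Iic18 hF_neg hF0) ENNReal.ofReal_lt_top).ne
  have hlbv : LocallyBoundedVariationOn F Set.univ := hbvF.locallyBoundedVariationOn
  -- the variation function V and the second monotone part Q
  set V : ℝ → ℝ := fun t => variationOnFromTo F Set.univ (-1) t with hVdef
  have hVmono : Monotone V := by
    rw [← monotoneOn_univ]
    exact variationOnFromTo.monotoneOn hlbv (Set.mem_univ (-1 : ℝ))
  have hQmono : Monotone (fun t => V t - F t) := by
    rw [← monotoneOn_univ]
    intro a ha b hb hab
    exact variationOnFromTo.sub_self_monotoneOn hlbv (Set.mem_univ (-1 : ℝ)) ha hb hab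
  have hVadd : ∀ a b : ℝ, V a + variationOnFromTo F Set.univ a b = V b := fun a b =>
    variationOnFromTo.add hlbv (Set.mem_univ _) (Set.mem_univ _) (Set.mem_univ _)
  have hVrc : ∀ x : ℝ, Filter.Tendsto V (nhdsWithin x (Set.Ioi x)) (nhds (V x)) := by
    intro x
    rw [Metric.tendsto_nhds]
    intro ε hε
    obtain ⟨u, hxu, huvar⟩ := small_var_right18 hbvF (hFrc x) (show (0:ℝ) < ε/4 by linarith)
    filter_upwards [Ioc_mem_nhdsGT_of_mem ⟨le_refl x, hxu⟩] with z hz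
    have h1 : V z - V x = variationOnFromTo F Set.univ x z := by
      have := hVadd x z
      linarith
    have h2 : variationOnFromTo F Set.univ x z
        = (eVariationOn F (Set.univ ∩ Set.Icc x z)).toReal :=
      variationOnFromTo.eq_of_le F Set.univ hz.1.le
    have h3 : eVariationOn F (Set.Icc x z) ≤ ENNReal.ofReal (ε/4 + ε/4) := by
      rw [ENNReal.ofReal_add (by linarith) (by linarith)]
      exact le_trans (eVariationOn.mono F (Set.Icc_subset_Icc_right hz.2)) huvar
    have h4 : (eVariationOn F (Set.Icc x z)).toReal ≤ ε/4 + ε/4 := by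
      refine le_trans (ENNReal.toReal_mono ENNReal.ofReal_ne_top h3) ?_
      rw [ENNReal.toReal_ofReal (by linarith)]
    have h5 : V z - V x ≤ ε/4 + ε/4 := by
      rw [h1, h2, Set.univ_inter]
      exact h4
    have h6 : 0 ≤ V z - V x := sub_nonneg.mpr (hVmono hz.1.le)
    rw [Real.dist_eq, abs_of_nonneg h6]
    linarith
  have hVrc' : ∀ x : ℝ, ContinuousWithinAt V (Set.Ici x) x := fun x =>
    continuousWithinAt_Ioi_iff_Ici.mp (hVrc x)
  have hQrc' : ∀ x : ℝ, ContinuousWithinAt (fun t => V t - F t) (Set.Ici x) x := fun x =>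
    (hVrc' x).sub (hFrc' x)
  -- constancy of V
  have hVm1 : V (-1) = 0 := variationOnFromTo.self F Set.univ (-1)
  have hVconst_neg : ∀ t : ℝ, t < 0 → V t = 0 := by
    intro t ht
    have hconst : ∀ a b : ℝ, b < 0 →
        eVariationOn F (Set.univ ∩ Set.Icc a b) = 0 := by
      intro a b hb
      apply eVariationOn.constant_on
      rintro _ ⟨z, ⟨_, hz⟩, rfl⟩ _ ⟨w, ⟨_, hw⟩, rfl⟩
      rw [hF_neg z (lt_of_le_of_lt hz.2 hb), hF_neg w (lt_of_le_of_lt hw.2 hb)]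
    rcases le_or_gt (-1 : ℝ) t with h | h
    · rw [hVdef]
      show variationOnFromTo F Set.univ (-1) t = 0
      rw [variationOnFromTo.eq_of_le F Set.univ h, hconst (-1) t ht, ENNReal.toReal_zero]
    · rw [hVdef]
      show variationOnFromTo F Set.univ (-1) t = 0
      rw [variationOnFromTo.eq_of_ge F Set.univ h.le,
        hconst t (-1) (by norm_num), ENNReal.toReal_zero, neg_zero]
  have hVconstT : ∀ t : ℝ, T ≤ t → V t = V T := by
    intro t ht
    have h1 := hVadd T t
    have h2 : variationOnFromTo F Set.univ T t = 0 := by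
      rw [variationOnFromTo.eq_of_le F Set.univ ht]
      have : eVariationOn F (Set.univ ∩ Set.Icc T t) = 0 := by
        apply eVariationOn.constant_on
        rintro _ ⟨z, ⟨_, hz⟩, rfl⟩ _ ⟨w, ⟨_, hw⟩, rfl⟩
        rw [hF_ge z hz.1, hF_ge w hw.1]
      rw [this, ENNReal.toReal_zero]
    linarith
  -- limits at infinity
  have hVbot : Filter.Tendsto V Filter.atBot (nhds 0) := by
    apply Filter.Tendsto.congr' _ (tendsto_const_nhds (α := ℝ) (f := Filter.atBot))
    filter_upwards [Filter.eventually_le_atBot (-1 : ℝ)] with t ht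
    exact (hVconst_neg t (by linarith)).symm
  have hVtop : Filter.Tendsto V Filter.atTop (nhds (V T)) := by
    apply Filter.Tendsto.congr' _ (tendsto_const_nhds (α := ℝ) (f := Filter.atTop))
    filter_upwards [Filter.eventually_ge_atTop T] with t ht
    exact (hVconstT t ht).symm
  have hQbot : Filter.Tendsto (fun t => V t - F t) Filter.atBot (nhds 0) := by
    apply Filter.Tendsto.congr' _ (tendsto_const_nhds (α := ℝ) (f := Filter.atBot))
    filter_upwards [Filter.eventually_le_atBot (-1 : ℝ)] with t ht
    rw [hVconst_neg t (by linarith), hF_neg t (by linarith), sub_zero]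
  have hQtop : Filter.Tendsto (fun t => V t - F t) Filter.atTop (nhds (V T - v T)) := by
    apply Filter.Tendsto.congr' _ (tendsto_const_nhds (α := ℝ) (f := Filter.atTop))
    filter_upwards [Filter.eventually_ge_atTop T] with t ht
    rw [hVconstT t ht, hF_ge t ht]
  -- Stieltjes functions
  set p : StieltjesFunction ℝ := ⟨V, hVmono, hVrc'⟩ with hpdef
  set q : StieltjesFunction ℝ := ⟨fun t => V t - F t, hQmono, hQrc'⟩ with hqdef
  haveI hpfin : IsFiniteMeasure p.measure := p.isFiniteMeasure hVbot hVtop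
  haveI hqfin : IsFiniteMeasure q.measure := q.isFiniteMeasure hQbot hQtop
  -- left limits at 0 vanish
  have hnebot : (nhdsWithin (0:ℝ) (Set.Iio 0)).NeBot := by infer_instance
  have hlefV : Function.leftLim V 0 = 0 := by
    refine tendsto_nhds_unique (hVmono.tendsto_leftLim 0) ?_
    apply Filter.Tendsto.congr' _ (tendsto_const_nhds (α := ℝ))
    filter_upwards [self_mem_nhdsWithin] with z hz
    exact (hVconst_neg z hz).symm
  have hlefQ : Function.leftLim (fun t => V t - F t) 0 = 0 := by
    refine tendsto_nhds_unique (hQmono.tendsto_leftLim 0) ?_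
    apply Filter.Tendsto.congr' _ (tendsto_const_nhds (α := ℝ))
    filter_upwards [self_mem_nhdsWithin] with z hz
    rw [hVconst_neg z hz, hF_neg z hz, sub_zero]
  refine ⟨p.measure.toSignedMeasure - q.measure.toSignedMeasure, ?_, ?_⟩
  · -- the Icc values
    intro t ht
    rw [VectorMeasure.sub_apply,
      Measure.toSignedMeasure_apply_measurable measurableSet_Icc,
      Measure.toSignedMeasure_apply_measurable measurableSet_Icc,
      measureReal_def, measureReal_def, p.measure_Icc, q.measure_Icc]
    have hVt : (0:ℝ) ≤ V t := hVm1 ▸ hVmono (by linarith [ht.1] : (-1:ℝ) ≤ t)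
    have hQm1 : V (-1) - F (-1) = 0 := by rw [hVm1, hF_neg (-1) (by norm_num), sub_zero]
    have hQt : (0:ℝ) ≤ V t - F t := hQm1 ▸ hQmono (by linarith [ht.1] : (-1:ℝ) ≤ t)
    have hp0 : Function.leftLim (⇑p) 0 = 0 := hlefV
    have hq0 : Function.leftLim (⇑q) 0 = 0 := hlefQ
    rw [hp0, hq0, sub_zero, sub_zero]
    show (ENNReal.ofReal (V t)).toReal - (ENNReal.ofReal (V t - F t)).toReal = v t
    rw [ENNReal.toReal_ofReal hVt, ENNReal.toReal_ofReal hQt]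
    have : F t = v t := hF_Icc t ht.1 ht.2
    linarith
  · -- vanishing outside [0, T]
    intro s hs hdisj
    have hsub : s ⊆ Set.Iio 0 ∪ Set.Ioi T := by
      intro z hz
      by_contra hcon
      simp only [Set.mem_union, Set.mem_Iio, Set.mem_Ioi, not_or, not_lt] at hcon
      have : z ∈ s ∩ Set.Icc (0:ℝ) T := ⟨hz, hcon.1, hcon.2⟩
      rw [hdisj] at this
      exact this
    have hcover : Set.Iio (0:ℝ) ⊆ ⋃ n : ℕ, Set.Iic (-(1:ℝ)/(n+1)) := by
      intro z hz
      obtain ⟨n, hn⟩ := exists_nat_one_div_lt (show (0:ℝ) < -z by simpa using hz)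
      refine Set.mem_iUnion.mpr ⟨n, ?_⟩
      simp only [Set.mem_Iic]
      rw [div_eq_mul_inv, neg_mul, one_mul]
      rw [div_eq_mul_inv, one_mul] at hn
      linarith
    have hcover2 : Set.Ioi T ⊆ ⋃ n : ℕ, Set.Ioc T (T + (n+1)) := by
      intro z hz
      obtain ⟨n, hn⟩ := exists_nat_ge (z - T)
      refine Set.mem_iUnion.mpr ⟨n, hz, by linarith⟩
    have hpIio : p.measure (Set.Iio 0) = 0 := by
      refine measure_mono_null hcover (measure_iUnion_null fun n => ?_)
      rw [p.measure_Iic hVbot]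
      have hneg : (-(1:ℝ)/(n+1)) < 0 := div_neg_of_neg_of_pos (by norm_num) (by positivity)
      show ENNReal.ofReal (V (-(1:ℝ)/(n+1)) - 0) = 0
      rw [hVconst_neg _ hneg]
      simp
    have hpIoi : p.measure (Set.Ioi T) = 0 := by
      refine measure_mono_null hcover2 (measure_iUnion_null fun n => ?_)
      rw [p.measure_Ioc]
      show ENNReal.ofReal (V (T + (n+1)) - V T) = 0
      rw [hVconstT _ (by linarith [Nat.cast_nonneg (α := ℝ) n])]
      simp
    have hqIio : q.measure (Set.Iio 0) = 0 := by
      refine measure_mono_null hcover (measure_iUnion_null fun n => ?_)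
      rw [q.measure_Iic hQbot]
      have hneg : (-(1:ℝ)/(n+1)) < 0 := div_neg_of_neg_of_pos (by norm_num) (by positivity)
      show ENNReal.ofReal ((V (-(1:ℝ)/(n+1)) - F (-(1:ℝ)/(n+1))) - 0) = 0
      rw [hVconst_neg _ hneg, hF_neg _ hneg]
      simp
    have hqIoi : q.measure (Set.Ioi T) = 0 := by
      refine measure_mono_null hcover2 (measure_iUnion_null fun n => ?_)
      rw [q.measure_Ioc]
      show ENNReal.ofReal ((V (T + (n+1)) - F (T + (n+1))) - (V T - F T)) = 0
      rw [hVconstT _ (by linarith [Nat.cast_nonneg (α := ℝ) n]),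
        hF_ge _ (by linarith [Nat.cast_nonneg (α := ℝ) n]), hF_ge T le_rfl]
      simp
    have hp0 : p.measure s = 0 :=
      measure_mono_null hsub (by rw [measure_union_null_iff]; exact ⟨hpIio, hpIoi⟩)
    have hq0 : q.measure s = 0 :=
      measure_mono_null hsub (by rw [measure_union_null_iff]; exact ⟨hqIio, hqIoi⟩)
    rw [VectorMeasure.sub_apply, Measure.toSignedMeasure_apply_measurable hs,
      Measure.toSignedMeasure_apply_measurable hs, measureReal_def, measureReal_def, hp0, hq0]
    simp

end AuxStmt18f
section AuxStmt18g

open MeasureTheory Set Filter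

lemma represents_add18 {T : ℝ} {μ ν : SignedMeasure ℝ} {a b : ℝ → ℝ}
    (hμ : Represents T μ a) (hν : Represents T ν b) :
    Represents T (μ + ν) (fun t => a t + b t) := by
  constructor
  · intro t ht
    rw [VectorMeasure.add_apply, hμ.1 t ht, hν.1 t ht]
  · intro s hs hdisj
    rw [VectorMeasure.add_apply, hμ.2 s hs hdisj, hν.2 s hs hdisj, add_zero]

lemma intD_eq18 {T : ℝ} (hT : 0 ≤ T) {μ : SignedMeasure ℝ} {v : ℝ → ℝ}
    (h : Represents T μ v) (f : ℝ → ℝ) : intD T f v = sInt μ f := by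
  have hex : ∃ μ' : SignedMeasure ℝ, Represents T μ' v := ⟨μ, h⟩
  rw [intD, dif_pos hex]
  congr 1
  exact represents_unique18 hT hex.choose_spec h

lemma intD_add18 {T : ℝ} (hT : 0 < T) {a b : ℝ → ℝ} (ha : MemV T a) (hb : MemV T b)
    {f : ℝ → ℝ} (hf : Continuous f) :
    intD T f (fun t => a t + b t) = intD T f a + intD T f b := by
  obtain ⟨μ, hμ⟩ := exists_represents18 hT ha
  obtain ⟨ν, hν⟩ := exists_represents18 hT hb
  rw [intD_eq18 hT.le (represents_add18 hμ hν) f, intD_eq18 hT.le hμ f, intD_eq18 hT.le hν f]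
  exact sInt_add18 hμ.2 hν.2 hf

lemma memV_add18 {T : ℝ} {a b : ℝ → ℝ} (ha : MemV T a) (hb : MemV T b) :
    MemV T (fun t => a t + b t) := by
  refine ⟨cadlag_add18 ha.1 hb.1, ?_⟩
  show eVariationOn (fun t => a t + b t) (Set.Icc 0 T) ≠ ⊤
  refine ne_top_of_le_ne_top ?_ (eVariationOn_add_le18 a b (Set.Icc 0 T))
  exact ENNReal.add_ne_top.mpr ⟨ha.2, hb.2⟩

end AuxStmt18g
/-- Addition is sequentially `S`-continuous (Section 4, item 7). -/
theorem stmt18 (T : ℝ) (hT : 0 < T) (x y : ℕ → ℝ → ℝ) (x₀ y₀ : ℝ → ℝ)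
    (hx : ∀ n, Cadlag T (x n)) (hy : ∀ n, Cadlag T (y n))
    (hx₀ : Cadlag T x₀) (hy₀ : Cadlag T y₀)
    (h1 : SConv T x x₀) (h2 : SConv T y y₀) :
    SConv T (fun n t => x n t + y n t) (fun t => x₀ t + y₀ t) := by
  intro ε hε
  obtain ⟨v, v₀, hvMem, hv₀Mem, hvx, hvx₀, hvten⟩ := h1 (ε/2) (by linarith)
  obtain ⟨w, w₀, hwMem, hw₀Mem, hwy, hwy₀, hwten⟩ := h2 (ε/2) (by linarith)
  refine ⟨fun n t => v n t + w n t, fun t => v₀ t + w₀ t,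
    fun n => memV_add18 (hvMem n) (hwMem n), memV_add18 hv₀Mem hw₀Mem, ?_, ?_, ?_⟩
  · intro n t ht
    have h1 := hvx n t ht
    have h2 := hwy n t ht
    calc |x n t + y n t - (v n t + w n t)|
        = |(x n t - v n t) + (y n t - w n t)| := by ring_nf
      _ ≤ |x n t - v n t| + |y n t - w n t| := abs_add_le _ _
      _ ≤ ε/2 + ε/2 := add_le_add h1 h2
      _ = ε := by ring
  · intro t ht
    have h1 := hvx₀ t ht
    have h2 := hwy₀ t ht
    calc |x₀ t + y₀ t - (v₀ t + w₀ t)|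
        = |(x₀ t - v₀ t) + (y₀ t - w₀ t)| := by ring_nf
      _ ≤ |x₀ t - v₀ t| + |y₀ t - w₀ t| := abs_add_le _ _
      _ ≤ ε/2 + ε/2 := add_le_add h1 h2
      _ = ε := by ring
  · intro f hf
    have hlim := (hvten f hf).add (hwten f hf)
    rw [← intD_add18 hT hv₀Mem hw₀Mem hf] at hlim
    refine hlim.congr fun n => ?_
    exact (intD_add18 hT (hvMem n) (hwMem n) hf).symm

end
end
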